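/- arXiv:2501.15540 — 5 statements merged into one kernel-verified Lean document; each statement's English description precedes it below -/
import Mathlib

section
/- Let A : ℝⁿ → Set ℝⁿ be a set-valued operator that is partly smooth at x̄ relative to a manifold M ⊆ ℝⁿ given by a C^p patch through x̄. Then there exists δ > 0 such that for every x ∈ M with ‖x − x̄‖ < δ one has N_M(x) = Lin(A(x)). -/
open Filter Topology Set RealInnerProductSpace

noncomputable section

/-- A set-valued operator `A` is upper semicontinuous: whenever `x k → x₀`,
`u k ∈ A (x k)` for all `k`, and `u k → u₀`, then `u₀ ∈ A x₀`. -/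
def UpperSC {E : Type*} [NormedAddCommGroup E] [InnerProductSpace ℝ E]
    (A : E → Set E) : Prop :=
  ∀ (x u : ℕ → E) (x₀ u₀ : E),
    Tendsto x atTop (𝓝 x₀) → (∀ k, u k ∈ A (x k)) → Tendsto u atTop (𝓝 u₀) →
      u₀ ∈ A x₀

/-- `A` is lower semicontinuous along `S` at `x₀ ∈ S`. -/
def LowerSCAlongAt {E : Type*} [NormedAddCommGroup E] [InnerProductSpace ℝ E]
    (A : E → Set E) (S : Set E) (x₀ : E) : Prop :=
  ∀ u₀ ∈ A x₀, ∀ x : ℕ → E, (∀ k, x k ∈ S) → Tendsto x atTop (𝓝 x₀) →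
    ∃ u : ℕ → E, (∀ k, u k ∈ A (x k)) ∧ Tendsto u atTop (𝓝 u₀)

/-- `A` is continuous along `S` near `xbar`: lower semicontinuous along `S` at every
point of `S` in some neighborhood of `xbar`. -/
def ContinuousAlongNear {E : Type*} [NormedAddCommGroup E] [InnerProductSpace ℝ E]
    (A : E → Set E) (S : Set E) (xbar : E) : Prop :=
  ∃ W ∈ 𝓝 xbar, ∀ x ∈ S ∩ W, LowerSCAlongAt A S x

/-- A `C^p` patch (local parametrization) of a manifold `M ⊆ E` through `xbar`,
with parameter domain `F` (playing the role of `ℝ^d`). -/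
structure CpPatch (p : ℕ∞) (F : Type*) [NormedAddCommGroup F] [InnerProductSpace ℝ F]
    {E : Type*} [NormedAddCommGroup E] [InnerProductSpace ℝ E]
    (M : Set E) (xbar : E) where
  V : Set F
  toFun : F → E
  isOpen_V : IsOpen V
  zero_mem : (0 : F) ∈ V
  contDiffOn : ContDiffOn ℝ p toFun V
  injOn : Set.InjOn toFun V
  fderiv_injective : ∀ t ∈ V, Function.Injective (fderiv ℝ toFun t)
  map_zero : toFun 0 = xbar
  image_eq : M = toFun '' V

namespace CpPatch

variable {p : ℕ∞} {F : Type*} [NormedAddCommGroup F] [InnerProductSpace ℝ F]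
  {E : Type*} [NormedAddCommGroup E] [InnerProductSpace ℝ E] {M : Set E} {xbar : E}

/-- The tangent space `T_M(x) = range (Dφ(t))` where `x = φ(t)`, `t ∈ V`. -/
def tangent (P : CpPatch p F M xbar) (x : E) : Submodule ℝ E :=
  haveI : Nonempty F := ⟨0⟩
  LinearMap.range (fderiv ℝ P.toFun (Function.invFunOn P.toFun P.V x) : F →ₗ[ℝ] E)

/-- The normal space `N_M(x) = (T_M(x))ᗮ`. -/
def normal (P : CpPatch p F M xbar) (x : E) : Submodule ℝ E :=
  (P.tangent x)ᗮ

end CpPatch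

/-- `Lin S`: the direction of the affine span of `S`. -/
def Lin {E : Type*} [NormedAddCommGroup E] [InnerProductSpace ℝ E] (S : Set E) :
    Submodule ℝ E :=
  (affineSpan ℝ S).direction

/-- `A` is partly smooth at `xbar` relative to `M` (given by the `C^p` patch `P`). -/
def PartlySmoothAt {p : ℕ∞} {F : Type*} [NormedAddCommGroup F] [InnerProductSpace ℝ F]
    {E : Type*} [NormedAddCommGroup E] [InnerProductSpace ℝ E] [FiniteDimensional ℝ E]
    (A : E → Set E) (M : Set E) (xbar : E) (P : CpPatch p F M xbar) : Prop :=
  UpperSC A ∧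
  -- Regularity
  (∃ W ∈ 𝓝 xbar, ∀ x ∈ W, (A x).Nonempty ∧ IsClosed (A x) ∧ Convex ℝ (A x)) ∧
  -- Sharpness
  P.normal xbar = Lin (A xbar) ∧
  (∃ η : E → E, ∃ W ∈ 𝓝 xbar, ContinuousOn η (M ∩ W) ∧
    ∀ x ∈ M ∩ W,
      (fun v => (Submodule.orthogonalProjection (P.tangent x) v : E)) '' A x = {η x}) ∧
  -- Continuity
  ContinuousAlongNear A M xbar

/-- The `ε`-localization of `A` around `(xbar, ubar)`. -/
def Locz {E : Type*} [NormedAddCommGroup E] [InnerProductSpace ℝ E]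
    (A : E → Set E) (xbar ubar : E) (ε : ℝ) (x : E) : Set E :=
  if ‖x - xbar‖ < ε then {u ∈ A x | ‖u - ubar‖ < ε} else ∅

/-- `A` is `r`-resolvent-regular at `xbar` for `ubar`, with constants `r > 0`, `ε > 0`. -/
def ResolventRegular {E : Type*} [NormedAddCommGroup E] [InnerProductSpace ℝ E]
    (A : E → Set E) (xbar ubar : E) (r ε : ℝ) : Prop :=
  0 < r ∧ 0 < ε ∧
  (∀ x y u v : E, u ∈ Locz A xbar ubar ε x → v ∈ Locz A xbar ubar ε y →
    (inner ℝ (x - y) (u - v) : ℝ) ≥ -r * ‖x - y‖ ^ 2) ∧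
  (∀ γ : ℝ, 0 < γ → γ < 1 / r →
    ∃ W ∈ 𝓝 (xbar + γ • ubar), ∃ J : E → E, ContinuousOn J W ∧
      ∀ z ∈ W, ∀ x : E,
        (∃ u ∈ Locz A xbar ubar ε x, z = x + γ • u) ↔ x = J z)

/-- The local union `U_{γ,ε} = ⋃_{x ∈ M, ‖x-x̄‖<ε} (x + γ A_ε(x))`. -/
def LocalUnion {E : Type*} [NormedAddCommGroup E] [InnerProductSpace ℝ E]
    (A : E → Set E) (M : Set E) (xbar ubar : E) (γ ε : ℝ) : Set E :=
  {z | ∃ x ∈ M, ‖x - xbar‖ < ε ∧ ∃ u ∈ Locz A xbar ubar ε x, z = x + γ • u}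



section AuxProof

open Module

variable {q : ℕ∞} {F : Type*} [NormedAddCommGroup F] [InnerProductSpace ℝ F]
  {E : Type*} [NormedAddCommGroup E] [InnerProductSpace ℝ E]

lemma CpPatch.xbar_mem {M : Set E} {xbar : E} (P : CpPatch q F M xbar) : xbar ∈ M := by
  rw [P.image_eq]; exact ⟨0, P.zero_mem, P.map_zero⟩

lemma CpPatch.finrank_tangent [FiniteDimensional ℝ F] [FiniteDimensional ℝ E]
    {M : Set E} {xbar : E} (P : CpPatch q F M xbar) {x : E} (hx : x ∈ M) :
    finrank ℝ (P.tangent x) = finrank ℝ F := by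
  haveI : Nonempty F := ⟨0⟩
  have hxV : Function.invFunOn P.toFun P.V x ∈ P.V := by
    rw [P.image_eq] at hx
    obtain ⟨t, ht, rfl⟩ := hx
    exact Function.invFunOn_mem ⟨t, ht, rfl⟩
  exact LinearMap.finrank_range_of_inj (P.fderiv_injective _ hxV)

lemma CpPatch.finrank_normal [FiniteDimensional ℝ F] [FiniteDimensional ℝ E]
    {M : Set E} {xbar : E} (P : CpPatch q F M xbar) {x : E} (hx : x ∈ M) :
    finrank ℝ (P.normal x) = finrank ℝ E - finrank ℝ F := by
  have h := Submodule.finrank_add_finrank_orthogonal (K := P.tangent x)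
  rw [P.finrank_tangent hx] at h
  have hn : P.normal x = (P.tangent x)ᗮ := rfl
  rw [hn]
  omega

lemma Lin_le_normal [FiniteDimensional ℝ E] {M : Set E} {xbar : E} (P : CpPatch q F M xbar)
    {A : E → Set E} {x η : E}
    (h : (fun v => (Submodule.orthogonalProjection (P.tangent x) v : E)) '' A x = {η}) :
    Lin (A x) ≤ P.normal x := by
  rw [Lin, direction_affineSpan, vectorSpan_def]
  refine Submodule.span_le.2 ?_
  intro w hw
  rw [Set.mem_vsub] at hw
  obtain ⟨u, hu, v, hv, rfl⟩ := hw
  have hu' : (Submodule.orthogonalProjection (P.tangent x) u : E) = η := by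
    have := Set.mem_image_of_mem (fun v => (Submodule.orthogonalProjection (P.tangent x) v : E)) hu
    rw [h] at this; exact this
  have hv' : (Submodule.orthogonalProjection (P.tangent x) v : E) = η := by
    have := Set.mem_image_of_mem (fun v => (Submodule.orthogonalProjection (P.tangent x) v : E)) hv
    rw [h] at this; exact this
  have h1 : u - (Submodule.orthogonalProjection (P.tangent x) u : E) ∈ (P.tangent x)ᗮ :=
    Submodule.sub_starProjection_mem_orthogonal (K := P.tangent x) u
  have h2 : v - (Submodule.orthogonalProjection (P.tangent x) v : E) ∈ (P.tangent x)ᗮ :=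
    Submodule.sub_starProjection_mem_orthogonal (K := P.tangent x) v
  have key : u -ᵥ v = (u - (Submodule.orthogonalProjection (P.tangent x) u : E))
      - (v - (Submodule.orthogonalProjection (P.tangent x) v : E)) := by
    rw [vsub_eq_sub, hu', hv']; abel
  rw [SetLike.mem_coe, key]
  exact Submodule.sub_mem _ h1 h2

lemma eventually_affineIndependent_of_tendsto {G : Type*} [NormedAddCommGroup G]
    [NormedSpace ℝ G] {ι : Type*} [Finite ι] [Nonempty ι]
    {g : ι → G} (hg : AffineIndependent ℝ g) {Q : ℕ → ι → G}
    (hQ : Tendsto Q atTop (𝓝 g)) :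
    ∀ᶠ k in atTop, AffineIndependent ℝ (Q k) := by
  classical
  inhabit ι
  rw [affineIndependent_iff_linearIndependent_vsub ℝ g default] at hg
  have hcont : Continuous fun (f : ι → G) (j : {x : ι // x ≠ default}) => f j -ᵥ f default := by
    simp only [vsub_eq_sub]
    exact continuous_pi fun j => (continuous_apply (j : ι)).sub (continuous_apply default)
  have hQ' : Tendsto (fun k (j : {x : ι // x ≠ default}) => Q k j -ᵥ Q k default) atTop
      (𝓝 fun j : {x : ι // x ≠ default} => g j -ᵥ g default) :=
    (hcont.tendsto g).comp hQ
  filter_upwards [hQ'.eventually hg.eventually] with k hk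
  rw [affineIndependent_iff_linearIndependent_vsub ℝ (Q k) default]
  exact hk

end AuxProof

/-- local normal sharpness. -/
theorem partly_smooth_local_normal_sharpness {n d : ℕ} {p : ℕ∞} (hp : 1 ≤ p)
    (A : EuclideanSpace ℝ (Fin n) → Set (EuclideanSpace ℝ (Fin n))) (M : Set (EuclideanSpace ℝ (Fin n))) (xbar : EuclideanSpace ℝ (Fin n))
    (P : CpPatch p (EuclideanSpace ℝ (Fin d)) M xbar)
    (hA : PartlySmoothAt A M xbar P) :
    ∃ δ > 0, ∀ x ∈ M, ‖x - xbar‖ < δ → P.normal x = Lin (A x) := by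
  classical
  obtain ⟨husc, ⟨Wr, hWr, hreg⟩, hsharp_eq, ⟨η, Ws, hWs, hηcont, hηproj⟩, Wc, hWc, hlsc⟩ := hA
  by_contra hcon
  push_neg at hcon
  have hsel : ∀ k : ℕ, ∃ x, x ∈ M ∧ ‖x - xbar‖ < 1 / (k + 1) ∧ P.normal x ≠ Lin (A x) := by
    intro k
    obtain ⟨x, hxM, hlt, hne⟩ := hcon (1 / ((k : ℝ) + 1)) (by positivity)
    exact ⟨x, hxM, hlt, hne⟩
  choose xs hxsM hxslt hxsne using hsel
  have hxs_tendsto : Tendsto xs atTop (𝓝 xbar) := by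
    rw [tendsto_iff_norm_sub_tendsto_zero]
    refine squeeze_zero (fun k => norm_nonneg _) (fun k => (hxslt k).le) ?_
    exact tendsto_one_div_add_atTop_nhds_zero_nat
  have hxbarM : xbar ∈ M := P.xbar_mem
  obtain ⟨u0, hu0⟩ := (hreg xbar (mem_of_mem_nhds hWr)).1
  obtain ⟨t, hts, htspan, htind⟩ :=
    exists_affineIndependent ℝ (EuclideanSpace ℝ (Fin n)) (A xbar)
  haveI : Finite t := finite_of_fin_dim_affineIndependent ℝ htind
  haveI : Fintype t := Fintype.ofFinite _
  have htne : t.Nonempty := by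
    rw [← affineSpan_nonempty (k := ℝ), htspan]
    exact ⟨u0, subset_affineSpan _ _ hu0⟩
  haveI : Nonempty t := htne.to_subtype
  set c : ℕ := Module.finrank ℝ (vectorSpan ℝ (Set.range ((↑) : t → EuclideanSpace ℝ (Fin n))))
    with hc_def
  have hcard : c + 1 = Fintype.card t := htind.finrank_vectorSpan_add_one
  have hLinxbar : Module.finrank ℝ (Lin (A xbar)) = c := by
    rw [Lin, ← htspan, direction_affineSpan, hc_def, Subtype.range_coe]
  have hnormal_all : ∀ x ∈ M, Module.finrank ℝ (P.normal x) = c := by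
    intro x hx
    calc Module.finrank ℝ (P.normal x)
        = Module.finrank ℝ (EuclideanSpace ℝ (Fin n)) -
            Module.finrank ℝ (EuclideanSpace ℝ (Fin d)) := P.finrank_normal hx
      _ = Module.finrank ℝ (P.normal xbar) := (P.finrank_normal hxbarM).symm
      _ = c := by rw [hsharp_eq]; exact hLinxbar
  have hlscx := hlsc xbar ⟨hxbarM, mem_of_mem_nhds hWc⟩
  have hseq : ∀ i : t, ∃ u : ℕ → EuclideanSpace ℝ (Fin n),
      (∀ k, u k ∈ A (xs k)) ∧ Tendsto u atTop (𝓝 (i : EuclideanSpace ℝ (Fin n))) :=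
    fun i => hlscx (i : EuclideanSpace ℝ (Fin n)) (hts i.2) xs hxsM hxs_tendsto
  choose us hus htus using hseq
  have hQ : Tendsto (fun k (i : t) => us i k) atTop
      (𝓝 fun i : t => (i : EuclideanSpace ℝ (Fin n))) :=
    tendsto_pi_nhds.2 fun i => htus i
  have hAI : ∀ᶠ k in atTop, AffineIndependent ℝ (fun i : t => us i k) :=
    eventually_affineIndependent_of_tendsto htind hQ
  have hWs' : ∀ᶠ k in atTop, xs k ∈ Ws := hxs_tendsto.eventually_mem hWs
  obtain ⟨k, hk_ai, hk_ws⟩ := (hAI.and hWs').exists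
  refine hxsne k ?_
  have hle : Lin (A (xs k)) ≤ P.normal (xs k) :=
    Lin_le_normal P (hηproj (xs k) ⟨hxsM k, hk_ws⟩)
  have hge : c ≤ Module.finrank ℝ (Lin (A (xs k))) := by
    have h1 : Module.finrank ℝ (vectorSpan ℝ (Set.range fun i : t => us i k)) + 1
        = Fintype.card t := hk_ai.finrank_vectorSpan_add_one
    have h2 : vectorSpan ℝ (Set.range fun i : t => us i k) ≤ Lin (A (xs k)) := by
      rw [Lin, direction_affineSpan]
      exact vectorSpan_mono ℝ (by rintro _ ⟨i, rfl⟩; exact hus i k)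
    have h3 : c = Module.finrank ℝ (vectorSpan ℝ (Set.range fun i : t => us i k)) := by
      omega
    rw [h3]
    exact Submodule.finrank_mono h2
  exact (Submodule.eq_of_le_of_finrank_le hle
    (by rw [hnormal_all _ (hxsM k)]; exact hge)).symm

end
end

section
/- Let M ⊆ ℝⁿ be given by a C¹ patch through x̄. Then for every ε > 0, the linear span of the set ⋃_{x ∈ M, ‖x − x̄‖ < ε} (x + N_M(x)) = {x + v : x ∈ M, ‖x − x̄‖ < ε, v ∈ N_M(x)} is all of ℝⁿ. -/
open Filter Topology Set RealInnerProductSpace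

noncomputable section

/-- the local union of normal spaces spans the whole space. -/
theorem span_local_normal_union {n d : ℕ}
    (M : Set (EuclideanSpace ℝ (Fin n))) (xbar : EuclideanSpace ℝ (Fin n))
    (P : CpPatch 1 (EuclideanSpace ℝ (Fin d)) M xbar) :
    ∀ ε > 0,
      Submodule.span ℝ
        {z : EuclideanSpace ℝ (Fin n) | ∃ x ∈ M, ‖x - xbar‖ < ε ∧ ∃ v ∈ P.normal x, z = x + v} = ⊤ := by
  intro ε hε
  set S : Set (EuclideanSpace ℝ (Fin n)) :=
    {z | ∃ x ∈ M, ‖x - xbar‖ < ε ∧ ∃ v ∈ P.normal x, z = x + v} with hS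
  set K := Submodule.span ℝ S with hK
  have hxbarM : xbar ∈ M := by
    rw [P.image_eq]; exact ⟨0, P.zero_mem, P.map_zero⟩
  have hxnorm : ‖xbar - xbar‖ < ε := by simpa using hε
  have hxbarS : xbar ∈ S := ⟨xbar, hxbarM, hxnorm, 0, (P.normal xbar).zero_mem, by simp⟩
  have hinv : Function.invFunOn P.toFun P.V xbar = 0 := by
    have h := P.injOn.leftInvOn_invFunOn P.zero_mem
    rwa [P.map_zero] at h
  have hKclosed : IsClosed (K : Set (EuclideanSpace ℝ (Fin n))) :=
    Submodule.closed_of_finiteDimensional K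
  have hN : P.normal xbar ≤ K := by
    intro v hv
    have h1 : xbar + v ∈ K := Submodule.subset_span ⟨xbar, hxbarM, hxnorm, v, hv, rfl⟩
    have h2 : xbar ∈ K := Submodule.subset_span hxbarS
    simpa using K.sub_mem h1 h2
  have hT : P.tangent xbar ≤ K := by
    intro y hy
    rw [CpPatch.tangent, hinv] at hy
    obtain ⟨w, rfl⟩ := hy
    have hdiff : DifferentiableAt ℝ P.toFun 0 :=
      (P.contDiffOn.differentiableOn one_ne_zero).differentiableAt
        (P.isOpen_V.mem_nhds P.zero_mem)
    set g : ℝ → EuclideanSpace ℝ (Fin n) := fun s => P.toFun (s • w) with hg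
    have hgsmul : Tendsto (fun s : ℝ => s • w) (𝓝 0) (𝓝 0) := by
      have : Continuous (fun s : ℝ => s • w) := continuous_id.smul continuous_const
      simpa using this.tendsto 0
    have hgt : Tendsto g (𝓝 0) (𝓝 xbar) := by
      have hc : ContinuousAt P.toFun 0 :=
        P.contDiffOn.continuousOn.continuousAt (P.isOpen_V.mem_nhds P.zero_mem)
      have := hc.tendsto.comp hgsmul
      rwa [P.map_zero] at this
    have hline : HasDerivAt g (fderiv ℝ P.toFun 0 w) 0 := by
      have hsm : HasDerivAt (fun s : ℝ => s • w) w 0 := by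
        simpa using (hasDerivAt_id (0 : ℝ)).smul_const w
      have hF : HasFDerivAt P.toFun (fderiv ℝ P.toFun 0) ((0 : ℝ) • w) := by
        simpa using hdiff.hasFDerivAt
      exact hF.comp_hasDerivAt 0 hsm
    have hslope : Tendsto (slope g 0) (𝓝[≠] 0) (𝓝 (fderiv ℝ P.toFun 0 w)) :=
      hasDerivAt_iff_tendsto_slope.mp hline
    have hev : ∀ᶠ s in 𝓝[≠] (0 : ℝ), slope g 0 s ∈ (K : Set (EuclideanSpace ℝ (Fin n))) := by
      have h1 : ∀ᶠ s in 𝓝 (0 : ℝ), s • w ∈ P.V :=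
        hgsmul.eventually_mem (P.isOpen_V.mem_nhds P.zero_mem)
      have h2 : ∀ᶠ s in 𝓝 (0 : ℝ), ‖g s - xbar‖ < ε := by
        have : ∀ᶠ s in 𝓝 (0 : ℝ), g s ∈ Metric.ball xbar ε :=
          hgt.eventually_mem (Metric.ball_mem_nhds xbar hε)
        filter_upwards [this] with s hs
        simpa [Metric.mem_ball, dist_eq_norm] using hs
      filter_upwards [nhdsWithin_le_nhds h1, nhdsWithin_le_nhds h2] with s hs1 hs2
      have hgsS : g s ∈ S :=
        ⟨g s, by rw [P.image_eq]; exact ⟨s • w, hs1, rfl⟩, hs2, 0,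
          (P.normal (g s)).zero_mem, by simp⟩
      have hg0 : g 0 = xbar := by simp [g, P.map_zero]
      have : g s - g 0 ∈ K := by
        rw [hg0]
        exact K.sub_mem (Submodule.subset_span hgsS) (Submodule.subset_span hxbarS)
      simpa [slope] using K.smul_mem (s - 0)⁻¹ this
    exact hKclosed.mem_of_tendsto hslope hev
  have hsup : P.tangent xbar ⊔ P.normal xbar = ⊤ :=
    (Submodule.isCompl_orthogonal_of_hasOrthogonalProjection (K := P.tangent xbar)).sup_eq_top
  rw [eq_top_iff, ← hsup]
  exact sup_le hT hN

end
end

section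
/- Let A : ℝⁿ → Set ℝⁿ be partly smooth at x̄ relative to a manifold M given by a C^p patch through x̄, r-resolvent-regular at x̄ for ū ∈ A(x̄), with ū ∈ ri(A(x̄)). Then for every γ ∈ (0, 1/r) there exists ε̄ > 0 such that for every ε ∈ (0, ε̄) and every ϵ > 0 the following identification holds: whenever x, u ∈ ℝⁿ satisfy u ∈ A_ε(x) and x + γu belongs to the erosion U_{γ,ε} ⊖ B_ϵ := {z ∈ ℝⁿ : ∀ w, ‖w − z‖ ≤ ϵ → w ∈ U_{γ,ε}}, then x ∈ M. -/
open Filter Topology Set RealInnerProductSpace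

noncomputable section

/-- identification via the erosion of the local union. -/
theorem identification_erosion {n d : ℕ} {p : ℕ∞} (hp : 1 ≤ p)
    (A : EuclideanSpace ℝ (Fin n) → Set (EuclideanSpace ℝ (Fin n))) (M : Set (EuclideanSpace ℝ (Fin n))) (xbar ubar : EuclideanSpace ℝ (Fin n))
    (P : CpPatch p (EuclideanSpace ℝ (Fin d)) M xbar)
    (hA : PartlySmoothAt A M xbar P)
    (hubar : ubar ∈ A xbar) (r ε₀ : ℝ)
    (hreg : ResolventRegular A xbar ubar r ε₀)
    (hri : ubar ∈ intrinsicInterior ℝ (A xbar)) :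
    ∀ γ : ℝ, 0 < γ → γ < 1 / r → ∃ εbar > 0, ∀ ε : ℝ, 0 < ε → ε < εbar →
      ∀ ϵ : ℝ, 0 < ϵ → ∀ x u : EuclideanSpace ℝ (Fin n), u ∈ Locz A xbar ubar ε x →
        (∀ w : EuclideanSpace ℝ (Fin n), ‖w - (x + γ • u)‖ ≤ ϵ → w ∈ LocalUnion A M xbar ubar γ ε) →
        x ∈ M := by
  intro γ hγ hγr
  obtain ⟨hr, hε₀, _, hres⟩ := hreg
  obtain ⟨W, hW, J, hJcont, hJ⟩ := hres γ hγ hγr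
  obtain ⟨δ, hδ, hball⟩ := Metric.mem_nhds_iff.mp hW
  have h1γ : (0:ℝ) < 1 + γ := by linarith
  refine ⟨min ε₀ (δ / (1 + γ)), lt_min hε₀ (div_pos hδ h1γ), ?_⟩
  intro ε hε hεbar ϵ hϵ x u hu herosion
  have hεε₀ : ε < ε₀ := lt_of_lt_of_le hεbar (min_le_left _ _)
  have hxx : ‖x - xbar‖ < ε ∧ u ∈ A x ∧ ‖u - ubar‖ < ε := by
    by_cases h : ‖x - xbar‖ < ε
    · simp only [Locz, if_pos h, Set.mem_setOf_eq] at hu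
      exact ⟨h, hu.1, hu.2⟩
    · simp [Locz, if_neg h] at hu
  obtain ⟨hx1, hu1, hu2⟩ := hxx
  set z := x + γ • u with hzdef
  have hzW : z ∈ W := by
    apply hball
    have heq : z - (xbar + γ • ubar) = (x - xbar) + γ • (u - ubar) := by
      simp [hzdef, smul_sub]; abel
    have hnorm : ‖z - (xbar + γ • ubar)‖ ≤ ‖x - xbar‖ + γ * ‖u - ubar‖ := by
      rw [heq]
      calc ‖(x - xbar) + γ • (u - ubar)‖ ≤ ‖x - xbar‖ + ‖γ • (u - ubar)‖ :=
            norm_add_le _ _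
        _ = ‖x - xbar‖ + γ * ‖u - ubar‖ := by
            rw [norm_smul, Real.norm_of_nonneg hγ.le]
    have hεδ : ε < δ / (1 + γ) := lt_of_lt_of_le hεbar (min_le_right _ _)
    have hδ' : ε * (1 + γ) < δ := by
      have := (lt_div_iff₀ h1γ).mp hεδ
      linarith
    simp only [Metric.mem_ball, dist_eq_norm]
    nlinarith [norm_nonneg (x - xbar), norm_nonneg (u - ubar)]
  have hLoc : ∀ y v, v ∈ Locz A xbar ubar ε y → v ∈ Locz A xbar ubar ε₀ y := by
    intro y v hv
    by_cases h : ‖y - xbar‖ < ε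
    · simp only [Locz, if_pos h, Set.mem_setOf_eq] at hv
      simp only [Locz, if_pos (h.trans hεε₀), Set.mem_setOf_eq]
      exact ⟨hv.1, hv.2.trans hεε₀⟩
    · simp [Locz, if_neg h] at hv
  have hz : z ∈ LocalUnion A M xbar ubar γ ε := by
    apply herosion z
    simp [hzdef, hϵ.le]
  obtain ⟨x', hx'M, hx'norm, u', hu', hz'⟩ := hz
  have h1 : x = J z := (hJ z hzW x).mp ⟨u, hLoc _ _ hu, rfl⟩
  have h2 : x' = J z := (hJ z hzW x').mp ⟨u', hLoc _ _ hu', hz'⟩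
  rw [h1, ← h2]
  exact hx'M

end
end

section
/- Let H be a real inner product space, κ > 0, β > 0, and B : H → H with ⟨B x − B y, x − y⟩ ≥ κ‖x − y‖² and ‖B x − B y‖ ≤ (1/β)‖x − y‖ for all x, y. Let J : H → H be nonexpansive, let γ > 0 satisfy 0 ≤ 1 − 2γκ + γ²/β² < 1, and set ρ = √(1 − 2γκ + γ²/β²). If the sequence (x_k) satisfies x_{k+1} = J(x_k − γ B x_k) for all k ∈ ℕ and x̄ ∈ H satisfies x̄ = J(x̄ − γ B x̄), then ‖x_k − x̄‖ ≤ ρ^k ‖x_0 − x̄‖ for every k ∈ ℕ. -/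
open Filter Topology Set

noncomputable section

/-- linear convergence of Forward–Backward splitting. -/
theorem forward_backward_linear_convergence {H : Type*} [NormedAddCommGroup H]
    [InnerProductSpace ℝ H] (κ β : ℝ) (hκ : 0 < κ) (hβ : 0 < β)
    (B : H → H)
    (hmono : ∀ x y : H, (inner ℝ (B x - B y) (x - y) : ℝ) ≥ κ * ‖x - y‖ ^ 2)
    (hlip : ∀ x y : H, ‖B x - B y‖ ≤ (1 / β) * ‖x - y‖)
    (J : H → H) (hJ : ∀ x y : H, ‖J x - J y‖ ≤ ‖x - y‖)
    (γ : ℝ) (hγ : 0 < γ)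
    (hcontr₀ : 0 ≤ 1 - 2 * γ * κ + γ ^ 2 / β ^ 2)
    (hcontr₁ : 1 - 2 * γ * κ + γ ^ 2 / β ^ 2 < 1)
    (x : ℕ → H) (hiter : ∀ k : ℕ, x (k + 1) = J (x k - γ • B (x k)))
    (xbar : H) (hfix : xbar = J (xbar - γ • B xbar)) :
    ∀ k : ℕ, ‖x k - xbar‖
      ≤ Real.sqrt (1 - 2 * γ * κ + γ ^ 2 / β ^ 2) ^ k * ‖x 0 - xbar‖ := by
  set c : ℝ := 1 - 2 * γ * κ + γ ^ 2 / β ^ 2 with hc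
  set ρ : ℝ := Real.sqrt c with hρ
  have hρ0 : 0 ≤ ρ := Real.sqrt_nonneg c
  have key : ∀ a b : H, ‖(a - γ • B a) - (b - γ • B b)‖ ≤ ρ * ‖a - b‖ := by
    intro a b
    have hexp : (a - γ • B a) - (b - γ • B b) = (a - b) - γ • (B a - B b) := by
      rw [smul_sub]; abel
    have hsq : ‖(a - b) - γ • (B a - B b)‖ ^ 2 ≤ c * ‖a - b‖ ^ 2 := by
      rw [@norm_sub_sq_real]
      have h1 : (inner ℝ (a - b) (γ • (B a - B b)) : ℝ) = γ * inner ℝ (B a - B b) (a - b) := by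
        rw [real_inner_smul_right, real_inner_comm]
      have h2 : ‖γ • (B a - B b)‖ ^ 2 = γ ^ 2 * ‖B a - B b‖ ^ 2 := by
        rw [norm_smul]; simp [abs_of_pos hγ, mul_pow]
      rw [h1, h2]
      have hm := hmono a b
      have hl : ‖B a - B b‖ ^ 2 ≤ (1 / β) ^ 2 * ‖a - b‖ ^ 2 := by
        have := hlip a b
        have hn : (0:ℝ) ≤ ‖B a - B b‖ := norm_nonneg _
        nlinarith [norm_nonneg (a - b)]
      have hβ2 : (1 / β) ^ 2 = 1 / β ^ 2 := by field_simp
      have hl' : γ ^ 2 * ‖B a - B b‖ ^ 2 ≤ γ ^ 2 * ((1 / β) ^ 2 * ‖a - b‖ ^ 2) :=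
        mul_le_mul_of_nonneg_left hl (sq_nonneg γ)
      have hm' : 2 * γ * (κ * ‖a - b‖ ^ 2) ≤ 2 * γ * inner ℝ (B a - B b) (a - b) :=
        mul_le_mul_of_nonneg_left hm (by positivity)
      have hl'' : γ ^ 2 * ‖B a - B b‖ ^ 2 ≤ γ ^ 2 / β ^ 2 * ‖a - b‖ ^ 2 := by
        calc γ ^ 2 * ‖B a - B b‖ ^ 2 ≤ γ ^ 2 * ((1 / β) ^ 2 * ‖a - b‖ ^ 2) := hl'
          _ = γ ^ 2 / β ^ 2 * ‖a - b‖ ^ 2 := by field_simp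
      rw [hc]
      nlinarith [hl'', hm']
    have h2 := Real.sqrt_le_sqrt hsq
    rw [Real.sqrt_sq (norm_nonneg _)] at h2
    rw [hexp]
    calc ‖(a - b) - γ • (B a - B b)‖ ≤ Real.sqrt (c * ‖a - b‖ ^ 2) := h2
    _ = ρ * ‖a - b‖ := by
        rw [Real.sqrt_mul hcontr₀, Real.sqrt_sq (norm_nonneg _)]
  intro k
  induction k with
  | zero => simp
  | succ n ih =>
    have : ‖x (n + 1) - xbar‖ ≤ ρ * ‖x n - xbar‖ := by
      rw [hiter n]
      nth_rewrite 1 [hfix]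
      calc ‖J (x n - γ • B (x n)) - J (xbar - γ • B xbar)‖
          ≤ ‖(x n - γ • B (x n)) - (xbar - γ • B xbar)‖ := hJ _ _
        _ ≤ ρ * ‖x n - xbar‖ := key _ _
    calc ‖x (n + 1) - xbar‖ ≤ ρ * ‖x n - xbar‖ := this
    _ ≤ ρ * (ρ ^ n * ‖x 0 - xbar‖) := by nlinarith [norm_nonneg (x n - xbar)]
    _ = ρ ^ (n + 1) * ‖x 0 - xbar‖ := by ring

end
end

section
/- Let f : ℝⁿ → ℝ be the ℓ₀ function f(x) = #{i : x_i ≠ 0}, counting the nonzero coordinates of x in EuclideanSpace ℝ (Fin n). For x̄ ∈ ℝⁿ with support S = {i : x̄_i ≠ 0}, the limiting subdifferential of f at x̄ equals the coordinate subspace {v ∈ ℝⁿ : v_i = 0 for all i ∈ S}; equivalently, ∂f(x̄) = span{e_i : i ∉ S}, where e_i are the standard basis vectors. -/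
open Filter Topology Set

noncomputable section

/-- The Fréchet (regular) subdifferential of `f` at `x`. -/
def frechetSubdiff {E : Type*} [NormedAddCommGroup E] [InnerProductSpace ℝ E]
    (f : E → ℝ) (x : E) : Set E :=
  {v | ∀ ε > 0, ∃ δ > 0, ∀ z, z ≠ x → ‖z - x‖ < δ →
        f z - f x - (inner ℝ v (z - x) : ℝ) ≥ -ε * ‖z - x‖}

/-- The limiting subdifferential of `f` at `x`. -/
def limitingSubdiff {E : Type*} [NormedAddCommGroup E] [InnerProductSpace ℝ E]
    (f : E → ℝ) (x : E) : Set E :=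
  {v | ∃ xs vs : ℕ → E,
        Filter.Tendsto xs Filter.atTop (nhds x) ∧
        Filter.Tendsto (fun k => f (xs k)) Filter.atTop (nhds (f x)) ∧
        (∀ k, vs k ∈ frechetSubdiff f (xs k)) ∧
        Filter.Tendsto vs Filter.atTop (nhds v)}

namespace L0Aux

variable {n : ℕ}

/-- Membership in the Fréchet subdifferential of the ℓ₀ function. -/
lemma frechet_mem (x v : EuclideanSpace ℝ (Fin n)) (hv : ∀ i, x i ≠ 0 → v i = 0) :
    v ∈ frechetSubdiff
      (fun x : EuclideanSpace ℝ (Fin n) =>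
        ((Finset.univ.filter fun i => x i ≠ 0).card : ℝ)) x := by
  intro ε hε
  have hpos : (0:ℝ) < 1 / (‖v‖ + 1) := by positivity
  have hev : ∀ᶠ z in nhds x, (∀ i, x i ≠ 0 → z i ≠ 0) ∧ ‖z - x‖ < 1 / (‖v‖ + 1) := by
    apply Filter.Eventually.and
    · rw [eventually_all]
      intro i
      by_cases hx : x i = 0
      · filter_upwards with z hz; exact absurd hx hz
      · have hc : Continuous (fun z : EuclideanSpace ℝ (Fin n) => z i) :=
          (EuclideanSpace.proj (𝕜 := ℝ) i).continuous
        have := (hc.tendsto x).eventually_ne hx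
        filter_upwards [this] with z hz _; exact hz
    · have hc : Continuous (fun z : EuclideanSpace ℝ (Fin n) => ‖z - x‖) :=
        (continuous_id.sub continuous_const).norm
      have : Tendsto (fun z : EuclideanSpace ℝ (Fin n) => ‖z - x‖) (nhds x)
          (nhds ‖x - x‖) := hc.tendsto x
      rw [sub_self, norm_zero] at this
      exact this.eventually (eventually_lt_nhds hpos)
  rcases Metric.eventually_nhds_iff.mp hev with ⟨δ, hδ, hball⟩
  refine ⟨δ, hδ, ?_⟩
  intro z hzx hznorm
  obtain ⟨hz1, hz2⟩ := hball (by rwa [dist_eq_norm])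
  have hinner : (inner ℝ v (z - x) : ℝ) = ∑ i, v i * (z i - x i) := by
    simp [PiLp.inner_apply, RCLike.inner_apply, mul_comm]
  have hsub : (Finset.univ.filter fun i => x i ≠ 0) ⊆
      (Finset.univ.filter fun i => z i ≠ 0) := by
    intro i hi
    simp only [Finset.mem_filter, Finset.mem_univ, true_and] at hi ⊢
    exact hz1 i hi
  by_cases hcase : ∀ i, x i = 0 → z i = 0
  · have h0 : (inner ℝ v (z - x) : ℝ) = 0 := by
      rw [hinner]
      apply Finset.sum_eq_zero
      intro i _
      by_cases hx : x i = 0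
      · rw [hcase i hx, hx]; ring
      · rw [hv i hx]; ring
    have hge : ((Finset.univ.filter fun i => x i ≠ 0).card : ℝ) ≤
        ((Finset.univ.filter fun i => z i ≠ 0).card : ℝ) := by
      exact_mod_cast Finset.card_le_card hsub
    rw [h0]
    have := mul_nonneg hε.le (norm_nonneg (z - x))
    linarith
  · push_neg at hcase
    obtain ⟨i, hxi, hzi⟩ := hcase
    have hss : (Finset.univ.filter fun i => x i ≠ 0) ⊂
        (Finset.univ.filter fun i => z i ≠ 0) := by
      refine ⟨hsub, fun h => ?_⟩
      have := h (Finset.mem_filter.mpr ⟨Finset.mem_univ i, hzi⟩)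
      simp only [Finset.mem_filter] at this
      exact this.2 hxi
    have hcard : ((Finset.univ.filter fun i => x i ≠ 0).card : ℝ) + 1 ≤
        ((Finset.univ.filter fun i => z i ≠ 0).card : ℝ) := by
      exact_mod_cast Finset.card_lt_card hss
    have habs : |(inner ℝ v (z - x) : ℝ)| ≤ ‖v‖ * ‖z - x‖ := abs_real_inner_le_norm v (z - x)
    have h1 : ‖v‖ * ‖z - x‖ ≤ (‖v‖ + 1) * ‖z - x‖ := by
      have := norm_nonneg (z - x); nlinarith
    have h2 : (‖v‖ + 1) * ‖z - x‖ < 1 := by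
      have hv1 : (0:ℝ) < ‖v‖ + 1 := by positivity
      rw [div_eq_inv_mul, mul_one] at hz2
      have h := mul_lt_mul_of_pos_left hz2 hv1
      rwa [mul_inv_cancel₀ hv1.ne'] at h
    have h3 : (inner ℝ v (z - x) : ℝ) ≤ 1 := by
      have := abs_le.mp habs; linarith
    have := mul_nonneg hε.le (norm_nonneg (z - x))
    linarith

/-- The coordinate vanishing property for Fréchet subgradients. -/
lemma frechet_coord (x v : EuclideanSpace ℝ (Fin n))
    (hv : v ∈ frechetSubdiff
      (fun x : EuclideanSpace ℝ (Fin n) =>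
        ((Finset.univ.filter fun i => x i ≠ 0).card : ℝ)) x)
    (i : Fin n) (hx : x i ≠ 0) : v i = 0 := by
  by_contra hvi
  have hvabs : 0 < |v i| := abs_pos.mpr hvi
  have hxabs : 0 < |x i| := abs_pos.mpr hx
  obtain ⟨δ, hδ, h⟩ := hv (|v i| / 2) (by positivity)
  set t : ℝ := min δ |x i| / 2 with ht
  have ht0 : 0 < t := by
    have : 0 < min δ |x i| := lt_min hδ hxabs
    positivity
  have htδ : t < δ := by
    have h1 : min δ |x i| ≤ δ := min_le_left _ _
    have : 0 < min δ |x i| := lt_min hδ hxabs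
    simp only [ht]; linarith
  have htx : t < |x i| := by
    have h1 : min δ |x i| ≤ |x i| := min_le_right _ _
    have : 0 < min δ |x i| := lt_min hδ hxabs
    simp only [ht]; linarith
  set c : ℝ := t * v i / |v i| with hc
  have hcabs : |c| = t := by
    rw [hc, abs_div, abs_mul, abs_abs, abs_of_pos ht0]
    field_simp
  have hcvi : c * v i = t * |v i| := by
    rw [hc, div_mul_eq_mul_div, mul_assoc, ← abs_mul_abs_self (v i), ← mul_assoc,
      mul_div_assoc, div_self hvabs.ne', mul_one]
  have hc0 : c ≠ 0 := by
    intro h0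
    rw [h0, abs_zero] at hcabs
    exact ht0.ne' hcabs.symm
  set z : EuclideanSpace ℝ (Fin n) := x + c • EuclideanSpace.single i (1:ℝ) with hz
  have hzj : ∀ j, z j = x j + c * (if j = i then 1 else 0) := by
    intro j; simp [hz]
  have hzi : z i = x i + c := by rw [hzj i]; simp
  have hzne : z ≠ x := by
    intro heq
    have : z i = x i := by rw [heq]
    rw [hzi] at this
    exact hc0 (by linarith)
  have hzsub : z - x = c • EuclideanSpace.single i (1:ℝ) := by
    rw [hz]; abel
  have hznorm : ‖z - x‖ = t := by
    rw [hzsub, norm_smul, EuclideanSpace.norm_single, norm_one, mul_one,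
      Real.norm_eq_abs, hcabs]
  have hfz : (Finset.univ.filter fun j => z j ≠ 0) = (Finset.univ.filter fun j => x j ≠ 0) := by
    ext j
    simp only [Finset.mem_filter, Finset.mem_univ, true_and]
    by_cases hji : j = i
    · subst hji
      rw [hzi]
      constructor
      · intro _; exact hx
      · intro _ h0
        have hxc : x j = -c := by linarith
        have : |x j| = t := by rw [hxc, abs_neg, hcabs]
        exact absurd this (by linarith)
    · rw [hzj j, if_neg hji, mul_zero, add_zero]
  have hinner : (inner ℝ v (z - x) : ℝ) = t * |v i| := by
    rw [hzsub, real_inner_smul_right]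
    have : (inner ℝ v (EuclideanSpace.single i (1:ℝ)) : ℝ) = v i := by
      simp [PiLp.inner_apply, RCLike.inner_apply, EuclideanSpace.single_apply]
    rw [this, hcvi]
  have hkey : ((Finset.univ.filter fun j => z j ≠ 0).card : ℝ)
      - ((Finset.univ.filter fun j => x j ≠ 0).card : ℝ)
      - (inner ℝ v (z - x) : ℝ) ≥ -(|v i| / 2) * ‖z - x‖ :=
    h z hzne (by rw [hznorm]; exact htδ)
  rw [hfz, hinner, hznorm] at hkey
  nlinarith

/-- The set of vectors vanishing on the support, as a submodule. -/
def K (xbar : EuclideanSpace ℝ (Fin n)) : Submodule ℝ (EuclideanSpace ℝ (Fin n)) where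
  carrier := {v | ∀ i, xbar i ≠ 0 → v i = 0}
  add_mem' := by
    intro a b ha hb i hi
    have : (a + b) i = a i + b i := rfl
    rw [this, ha i hi, hb i hi, add_zero]
  zero_mem' := fun i _ => rfl
  smul_mem' := by
    intro c a ha i hi
    have : (c • a) i = c * a i := rfl
    rw [this, ha i hi, mul_zero]

end L0Aux

/-- the limiting subdifferential of the ℓ₀ function. -/
theorem limitingSubdiff_l0 {n : ℕ} (xbar : EuclideanSpace ℝ (Fin n)) :
    limitingSubdiff
        (fun x : EuclideanSpace ℝ (Fin n) =>
          ((Finset.univ.filter fun i => x i ≠ 0).card : ℝ)) xbar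
      = {v : EuclideanSpace ℝ (Fin n) | ∀ i, xbar i ≠ 0 → v i = 0} ∧
    limitingSubdiff
        (fun x : EuclideanSpace ℝ (Fin n) =>
          ((Finset.univ.filter fun i => x i ≠ 0).card : ℝ)) xbar
      = ↑(Submodule.span ℝ
          {w : EuclideanSpace ℝ (Fin n) |
            ∃ i, xbar i = 0 ∧ w = EuclideanSpace.single i (1 : ℝ)}) := by
  have h1 : limitingSubdiff
        (fun x : EuclideanSpace ℝ (Fin n) =>
          ((Finset.univ.filter fun i => x i ≠ 0).card : ℝ)) xbar
      = {v : EuclideanSpace ℝ (Fin n) | ∀ i, xbar i ≠ 0 → v i = 0} := by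
    ext v
    constructor
    · rintro ⟨xs, vs, hxs, _, hvs, hvv⟩ i hxi
      have hc : Continuous (fun z : EuclideanSpace ℝ (Fin n) => z i) :=
        (EuclideanSpace.proj (𝕜 := ℝ) i).continuous
      have hxsi : Tendsto (fun k => xs k i) atTop (nhds (xbar i)) :=
        (hc.tendsto xbar).comp hxs
      have hne : ∀ᶠ k in atTop, xs k i ≠ 0 := hxsi.eventually_ne hxi
      have hv0 : (fun k => vs k i) =ᶠ[atTop] fun _ => (0:ℝ) := by
        filter_upwards [hne] with k hk
        exact L0Aux.frechet_coord (xs k) (vs k) (hvs k) i hk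
      have hvi : Tendsto (fun k => vs k i) atTop (nhds (v i)) :=
        (hc.tendsto v).comp hvv
      exact tendsto_nhds_unique hvi (tendsto_const_nhds.congr' hv0.symm)
    · intro hv
      exact ⟨fun _ => xbar, fun _ => v, tendsto_const_nhds, tendsto_const_nhds,
        fun _ => L0Aux.frechet_mem xbar v hv, tendsto_const_nhds⟩
  refine ⟨h1, ?_⟩
  rw [h1]
  have hKspan : Submodule.span ℝ
      {w : EuclideanSpace ℝ (Fin n) |
        ∃ i, xbar i = 0 ∧ w = EuclideanSpace.single i (1 : ℝ)} = L0Aux.K xbar := by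
    apply le_antisymm
    · rw [Submodule.span_le]
      rintro w ⟨i, hxi, rfl⟩ j hj
      have hji : j ≠ i := fun h => hj (h ▸ hxi)
      simp [EuclideanSpace.single_apply, hji]
    · intro v hv
      have hvsum : v = ∑ i ∈ Finset.univ.filter (fun i => xbar i = 0),
          v i • EuclideanSpace.single i (1:ℝ) := by
        refine PiLp.ext fun j => ?_
        have hsum : (∑ i ∈ Finset.univ.filter (fun i => xbar i = 0),
            v i • EuclideanSpace.single i (1:ℝ)) j
            = ∑ i ∈ Finset.univ.filter (fun i => xbar i = 0),
              (v i • EuclideanSpace.single i (1:ℝ)) j :=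
          map_sum (EuclideanSpace.proj j (𝕜 := ℝ))
            (fun i => v i • EuclideanSpace.single i (1:ℝ))
            (Finset.univ.filter (fun i => xbar i = 0))
        rw [hsum]
        have hterm : ∀ i, (v i • EuclideanSpace.single i (1:ℝ)) j
            = if j = i then v i else 0 := by
          intro i
          have : (v i • EuclideanSpace.single i (1:ℝ)) j
              = v i * (EuclideanSpace.single i (1:ℝ)) j := rfl
          rw [this, EuclideanSpace.single_apply]
          split <;> simp
        simp_rw [hterm]
        rw [Finset.sum_ite_eq]
        by_cases hj : xbar j = 0
        · simp [hj]
        · simp only [Finset.mem_filter, Finset.mem_univ, true_and, hj, if_false]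
          exact hv j hj
      rw [hvsum]
      apply Submodule.sum_mem
      intro i hi
      apply Submodule.smul_mem
      exact Submodule.subset_span ⟨i, (Finset.mem_filter.mp hi).2, rfl⟩
  rw [hKspan]
  rfl

end
end
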